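/- Fix integers 2 ≤ r ≤ n, let B_n = {(a,s): 1 ≤ a,s ≤ n, a+(r−1)s ≤ n} and define B_{a,s} as above. Then the number of quadruples (a,s,b,t) ∈ B_n × B_n with |B_{a,s} ∩ B_{b,t}| ≥ 2 is at most 9n²r³/4. -/

import Mathlib

/-- `B_{a,s}` : the `r`-term progression `{a, a+s, …, a+(r−1)s}`, extended by
`a−s` when `a > s`. -/
def progSet (r a s : ℕ) : Finset ℕ :=
  ((Finset.range r).image fun j => a + j * s) ∪ (if s < a then {a - s} else ∅)

/-- `B_n` : pairs `(a,s)` with `1 ≤ a,s ≤ n` and `a+(r−1)s ≤ n`. -/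
def Bn (n r : ℕ) : Finset (ℕ × ℕ) :=
  (Finset.Icc 1 n ×ˢ Finset.Icc 1 n).filter fun q : ℕ × ℕ => q.1 + (r - 1) * q.2 ≤ n

/-- The number of quadruples `(a,s,b,t) ∈ B_n × B_n` with
`|B_{a,s} ∩ B_{b,t}| ≥ 2` is at most `9n²r³/4`. -/
lemma progSet_shift {r a s x : ℕ} (hx : x ∈ progSet r a s) :
    ∃ j, j ≤ r ∧ x + s = a + j * s := by
  unfold progSet at hx
  rcases Finset.mem_union.mp hx with h | h
  · obtain ⟨j0, hj0, rfl⟩ := Finset.mem_image.mp h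
    exact ⟨j0 + 1, by simpa using Finset.mem_range.mp hj0, by ring⟩
  · by_cases hsa : s < a
    · rw [if_pos hsa] at h
      have hx' : x = a - s := Finset.mem_singleton.mp h
      exact ⟨0, Nat.zero_le _, by omega⟩
    · rw [if_neg hsa] at h
      exact absurd h (Finset.notMem_empty x)

lemma two_points {r a s x y : ℕ} (hs : 1 ≤ s) (hx : x ∈ progSet r a s)
    (hy : y ∈ progSet r a s) (hxy : x < y) :
    ∃ k, 1 ≤ k ∧ k ≤ r ∧ y = x + k * s := by
  obtain ⟨j₁, hj₁, e₁⟩ := progSet_shift hx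
  obtain ⟨j₂, hj₂, e₂⟩ := progSet_shift hy
  have hj : j₁ < j₂ := by
    by_contra hcon
    push_neg at hcon
    have := Nat.mul_le_mul_right s hcon
    omega
  refine ⟨j₂ - j₁, by omega, by omega, ?_⟩
  have hdist : j₂ * s = j₁ * s + (j₂ - j₁) * s := by
    rw [← Nat.add_mul]
    congr 1
    omega
  omega

lemma mem_Bn {n r a s : ℕ} (h : (a, s) ∈ Bn n r) :
    1 ≤ a ∧ a ≤ n ∧ 1 ≤ s ∧ s ≤ n ∧ a + (r - 1) * s ≤ n := by
  have h' := Finset.mem_filter.mp h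
  have h'' := Finset.mem_product.mp h'.1
  simp only [Finset.mem_Icc] at h''
  exact ⟨h''.1.1, h''.1.2, h''.2.1, h''.2.2, h'.2⟩

lemma partner_bound {n r a s : ℕ} (hs : 1 ≤ s) :
    ((Bn n r).filter fun p : ℕ × ℕ =>
        2 ≤ (progSet r a s ∩ progSet r p.1 p.2).card).card
      ≤ r * r * ((r + 1) * (r + 1)) := by
  classical
  set T : Finset (ℕ × ℕ × ℕ × ℕ) :=
    Finset.Icc 1 r ×ˢ Finset.Icc 1 r ×ˢ Finset.range (r+1) ×ˢ Finset.range (r+1) with hT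
  have hcardT : T.card = r * r * ((r + 1) * (r + 1)) := by
    simp [hT, Nat.card_Icc]
    ring
  rw [← hcardT]
  apply Finset.card_le_card_of_surjOn
    (fun q : ℕ × ℕ × ℕ × ℕ =>
      ((a + q.2.2.1 * s - s) + q.1 * s / q.2.1 - q.2.2.2 * (q.1 * s / q.2.1),
        q.1 * s / q.2.1))
  intro p hp
  simp only [Finset.coe_filter, Set.mem_setOf_eq] at hp
  obtain ⟨hpB, hcard⟩ := hp
  obtain ⟨b, t⟩ := p
  obtain ⟨-, -, ht, -, -⟩ := mem_Bn hpB
  obtain ⟨x, hx, y, hy, hxy⟩ := Finset.one_lt_card.mp hcard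
  -- reduce to the case of an ordered pair of intersection points
  have main : ∀ u v : ℕ, u ∈ progSet r a s ∩ progSet r b t →
      v ∈ progSet r a s ∩ progSet r b t → u < v →
      ∃ q ∈ T,
        ((a + q.2.2.1 * s - s) + q.1 * s / q.2.1 - q.2.2.2 * (q.1 * s / q.2.1),
          q.1 * s / q.2.1) = (b, t) := by
    intro u v huI hvI huv
    have hu₁ : u ∈ progSet r a s := (Finset.mem_inter.mp huI).1
    have hu₂ : u ∈ progSet r b t := (Finset.mem_inter.mp huI).2
    have hv₁ : v ∈ progSet r a s := (Finset.mem_inter.mp hvI).1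
    have hv₂ : v ∈ progSet r b t := (Finset.mem_inter.mp hvI).2
    obtain ⟨k₁, hk₁1, hk₁r, ek₁⟩ := two_points hs hu₁ hv₁ huv
    obtain ⟨k₂, hk₂1, hk₂r, ek₂⟩ := two_points ht hu₂ hv₂ huv
    obtain ⟨i, hi, ei⟩ := progSet_shift hu₁
    obtain ⟨j, hj, ej⟩ := progSet_shift hu₂
    have hst : k₁ * s = k₂ * t := by omega
    refine ⟨(k₁, k₂, i, j), ?_, ?_⟩
    · simp [hT, Finset.mem_Icc, Finset.mem_range]
      omega
    · have hdiv : k₁ * s / k₂ = t := by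
        rw [hst, Nat.mul_div_cancel_left _ (by omega : 0 < k₂)]
      simp only [hdiv]
      have hxu : a + i * s - s = u := by omega
      rw [hxu]
      have : u + t - j * t = b := by omega
      rw [this]
  rcases lt_or_gt_of_ne hxy with h | h
  · exact main x y hx hy h
  · exact main y x hy hx h

lemma Bn_card_bound (n r : ℕ) (hr : 2 ≤ r) :
    (Bn n r).card * (r - 1) * 2 ≤ n * n := by
  classical
  set T2 : Finset (ℕ × ℕ) :=
    (Finset.Icc 1 n ×ˢ Finset.Icc 1 n).filter fun p : ℕ × ℕ => p.1 + p.2 ≤ n with hT2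
  have hr1 : 0 < r - 1 := by omega
  have step1 : (Bn n r).card * (r - 1) ≤ T2.card := by
    have e : (Bn n r).card * (r - 1) = (Bn n r ×ˢ Finset.range (r - 1)).card := by
      rw [Finset.card_product, Finset.card_range]
    rw [e]
    apply Finset.card_le_card_of_injOn
      (fun q : (ℕ × ℕ) × ℕ => (q.1.1, (q.1.2 - 1) * (r - 1) + q.2 + 1))
    · rintro ⟨⟨a, s⟩, j⟩ hq
      rw [Finset.mem_coe, Finset.mem_product] at hq
      obtain ⟨hB, hjr⟩ := hq
      rw [Finset.mem_range] at hjr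
      obtain ⟨ha1, han, hs1, hsn, hct⟩ := mem_Bn hB
      have key : (s - 1) * (r - 1) + j + 1 ≤ (r - 1) * s := by
        have hsub : (s - 1) * (r - 1) = s * (r - 1) - 1 * (r - 1) := by
          rw [← Nat.sub_mul]
        have hge : 1 * (r - 1) ≤ s * (r - 1) := Nat.mul_le_mul_right _ hs1
        have hms : s * (r - 1) = (r - 1) * s := Nat.mul_comm _ _
        omega
      simp only [hT2, Finset.mem_coe, Finset.mem_filter, Finset.mem_product, Finset.mem_Icc]
      refine ⟨⟨⟨ha1, han⟩, ⟨by omega, by omega⟩⟩, by omega⟩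
    · rintro ⟨⟨a, s⟩, j⟩ hq ⟨⟨a', s'⟩, j'⟩ hq' hfe
      simp only [Finset.coe_product, Set.mem_prod, Finset.mem_coe,
        Finset.mem_range] at hq hq'
      obtain ⟨hB, hjr⟩ := hq
      obtain ⟨hB', hjr'⟩ := hq'
      obtain ⟨-, -, hs1, -, -⟩ := mem_Bn hB
      obtain ⟨-, -, hs1', -, -⟩ := mem_Bn hB'
      have ha : a = a' := congrArg Prod.fst hfe
      have hc : (s - 1) * (r - 1) + j + 1 = (s' - 1) * (r - 1) + j' + 1 :=
        congrArg Prod.snd hfe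
      have hc' : j + (s - 1) * (r - 1) = j' + (s' - 1) * (r - 1) := by omega
      have hss : s - 1 = s' - 1 := by
        have := congrArg (fun z => z / (r - 1)) hc'
        simpa [Nat.add_mul_div_right _ _ hr1, Nat.div_eq_of_lt hjr,
          Nat.div_eq_of_lt hjr'] using this
      have hs : s = s' := by omega
      have hjj : j = j' := by
        subst hs
        omega
      simp [ha, hs, hjj]
  have step2 : T2.card * 2 ≤ n * n := by
    have e : T2.card * 2 = (T2 ×ˢ Finset.range 2).card := by
      rw [Finset.card_product, Finset.card_range]
    have e2 : n * n = (Finset.Icc 1 n ×ˢ Finset.Icc 1 n).card := by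
      rw [Finset.card_product, Nat.card_Icc, Nat.add_sub_cancel]
    rw [e, e2]
    apply Finset.card_le_card_of_injOn
      (fun q : (ℕ × ℕ) × ℕ =>
        if q.2 = 0 then (q.1.1, q.1.1 + q.1.2) else (q.1.1 + q.1.2, q.1.1))
    · rintro ⟨⟨a, c⟩, j⟩ hq
      rw [Finset.mem_coe, Finset.mem_product] at hq
      obtain ⟨hqT, -⟩ := hq
      simp only [hT2, Finset.mem_filter, Finset.mem_product, Finset.mem_Icc] at hqT
      obtain ⟨⟨⟨ha1, han⟩, hc1, hcn⟩, hsum⟩ := hqT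
      by_cases hj : j = 0 <;>
        simp [hj, Finset.mem_product, Finset.mem_Icc] <;> omega
    · rintro ⟨⟨a, c⟩, j⟩ hq ⟨⟨a', c'⟩, j'⟩ hq' hfe
      simp only [Finset.coe_product, Set.mem_prod, Finset.mem_coe,
        Finset.mem_range] at hq hq'
      obtain ⟨hqT, hj2⟩ := hq
      obtain ⟨hqT', hj2'⟩ := hq'
      simp only [hT2, Finset.mem_filter, Finset.mem_product, Finset.mem_Icc] at hqT hqT'
      obtain ⟨⟨⟨ha1, han⟩, hc1, hcn⟩, hsum⟩ := hqT
      obtain ⟨⟨⟨ha1', han'⟩, hc1', hcn'⟩, hsum'⟩ := hqT'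
      have hj01 : j = 0 ∨ j = 1 := by omega
      have hj01' : j' = 0 ∨ j' = 1 := by omega
      rcases hj01 with h | h <;> rcases hj01' with h' | h' <;>
        subst h <;> subst h' <;>
        simp only [Prod.mk.injEq] at hfe ⊢ <;>
        norm_num at hfe ⊢ <;>
        omega
  calc (Bn n r).card * (r - 1) * 2 ≤ T2.card * 2 := Nat.mul_le_mul_right _ step1
    _ ≤ n * n := step2

theorem stmt9 (n r : ℕ) (hr : 2 ≤ r) (hrn : r ≤ n) :
    ((((Bn n r ×ˢ Bn n r).filter fun q : (ℕ × ℕ) × ℕ × ℕ =>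
        2 ≤ (progSet r q.1.1 q.1.2 ∩ progSet r q.2.1 q.2.2).card).card : ℝ))
      ≤ 9 * (n : ℝ) ^ 2 * (r : ℝ) ^ 3 / 4 := by
  classical
  set F := (Bn n r ×ˢ Bn n r).filter fun q : (ℕ × ℕ) × ℕ × ℕ =>
      2 ≤ (progSet r q.1.1 q.1.2 ∩ progSet r q.2.1 q.2.2).card with hF
  set C := r * r * ((r + 1) * (r + 1)) with hC
  have h1 : F.card = ∑ q ∈ Bn n r, (F.filter fun p => p.1 = q).card := by
    apply Finset.card_eq_sum_card_fiberwise
    intro p hp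
    exact (Finset.mem_product.mp (Finset.mem_filter.mp hp).1).1
  have h2 : ∀ q ∈ Bn n r, (F.filter fun p => p.1 = q).card ≤ C := by
    intro q hq
    obtain ⟨a, s⟩ := q
    obtain ⟨-, -, hs1, -, -⟩ := mem_Bn hq
    calc (F.filter fun p => p.1 = (a, s)).card
        ≤ ((Bn n r).filter fun p : ℕ × ℕ =>
            2 ≤ (progSet r a s ∩ progSet r p.1 p.2).card).card := by
          apply Finset.card_le_card_of_injOn (fun p => p.2)
          · intro p hp
            simp only [Finset.mem_coe, Finset.mem_filter] at hp ⊢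
            obtain ⟨hpF, hp1⟩ := hp
            rw [hF, Finset.mem_filter] at hpF
            obtain ⟨hpp, hle⟩ := hpF
            refine ⟨(Finset.mem_product.mp hpp).2, ?_⟩
            rw [hp1] at hle
            exact hle
          · intro p hp p' hp' he
            simp only [Finset.coe_filter, Set.mem_setOf_eq] at hp hp'
            exact Prod.ext (hp.2.trans hp'.2.symm) he
      _ ≤ C := partner_bound hs1
  have h3 : F.card ≤ (Bn n r).card * C := by
    rw [h1]
    calc ∑ q ∈ Bn n r, (F.filter fun p => p.1 = q).card
        ≤ ∑ _q ∈ Bn n r, C := Finset.sum_le_sum h2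
      _ = (Bn n r).card * C := by rw [Finset.sum_const, smul_eq_mul]
  have h4 := Bn_card_bound n r hr
  have h5 : 2 * ((r + 1) * (r + 1)) ≤ 9 * r * (r - 1) := by
    obtain ⟨m, rfl⟩ : ∃ m, r = m + 2 := ⟨r - 2, by omega⟩
    have e : m + 2 - 1 = m + 1 := by omega
    rw [e]
    nlinarith
  have h6 : F.card * ((r - 1) * 2) ≤ n * n * C := by
    calc F.card * ((r - 1) * 2) ≤ ((Bn n r).card * C) * ((r - 1) * 2) :=
          Nat.mul_le_mul_right _ h3
      _ = ((Bn n r).card * (r - 1) * 2) * C := by ring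
      _ ≤ (n * n) * C := Nat.mul_le_mul_right _ h4
  have h7 : F.card * ((r - 1) * 4) ≤ 9 * (n * n) * (r * r * r) * (r - 1) := by
    calc F.card * ((r - 1) * 4) = (F.card * ((r - 1) * 2)) * 2 := by ring
      _ ≤ (n * n * C) * 2 := Nat.mul_le_mul_right _ h6
      _ = (n * n * (r * r)) * (2 * ((r + 1) * (r + 1))) := by rw [hC]; ring
      _ ≤ (n * n * (r * r)) * (9 * r * (r - 1)) := Nat.mul_le_mul_left _ h5
      _ = 9 * (n * n) * (r * r * r) * (r - 1) := by ring
  have h8 : F.card * 4 ≤ 9 * (n * n) * (r * r * r) := by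
    have hpos : 0 < r - 1 := by omega
    apply Nat.le_of_mul_le_mul_right _ hpos
    calc F.card * 4 * (r - 1) = F.card * ((r - 1) * 4) := by ring
      _ ≤ 9 * (n * n) * (r * r * r) * (r - 1) := h7
  rw [le_div_iff₀ (by norm_num : (0:ℝ) < 4)]
  have hcast := (Nat.cast_le (α := ℝ)).mpr h8
  push_cast at hcast
  refine le_trans hcast (le_of_eq (by ring))
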